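/- arXiv:1009.1522 — 2 statements merged into one kernel-verified Lean document; each statement's English description precedes it below -/
import Mathlib

section
/- Let A be an n×n complex matrix and let x be a point of the unit sphere of ℂⁿ. Then x is a critical point of the numerical map Φ_A (i.e. the differential of Φ_A at x, as a smooth map from the (2n−1)-dimensional unit sphere to ℂ ≅ ℝ², is not surjective) if and only if there exists θ ∈ [0,π] and λ ∈ ℝ such that H(θ)x = λx, where H(θ) = (e^{−iθ}A + e^{iθ}A*)/2. Moreover, the differential of Φ_A vanishes at x if and only if x is an eigenvector of both A and A*. -/
open MeasureTheory Metric
open scoped Matrix ComplexOrder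

noncomputable section

/-- Borel measurable structure on `ℂⁿ` with the Euclidean (ℓ²) norm. -/
instance (n : ℕ) : MeasurableSpace (EuclideanSpace ℂ (Fin n)) := MeasurableSpace.comap WithLp.ofLp MeasurableSpace.pi
instance (n : ℕ) : BorelSpace (EuclideanSpace ℂ (Fin n)) := PiLp.borelSpace 2

/-- The numerical map `Φ_A(x) = ⟨Ax, x⟩` (equal to `x* A x`). -/
def numericalMap {n : ℕ} (A : Matrix (Fin n) (Fin n) ℂ)
    (x : EuclideanSpace ℂ (Fin n)) : ℂ :=
  (inner ℂ x (Matrix.toEuclideanLin A x) : ℂ)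

/-- The normalized (uniform) Euclidean surface measure on the unit sphere of `ℂⁿ`. -/
def sphereUniform (n : ℕ) :
    Measure (sphere (0 : EuclideanSpace ℂ (Fin n)) 1) :=
  ((volume : Measure (EuclideanSpace ℂ (Fin n))).toSphere Set.univ)⁻¹ •
    (volume : Measure (EuclideanSpace ℂ (Fin n))).toSphere

/-- The numerical measure `μ_A`: pushforward of the uniform sphere measure under `Φ_A`. -/
def numericalMeasure {n : ℕ} (A : Matrix (Fin n) (Fin n) ℂ) : Measure ℂ :=
  (sphereUniform n).map
    (fun x : sphere (0 : EuclideanSpace ℂ (Fin n)) 1 => numericalMap A x)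

/-- The numerical range `W(A)`: image of the unit sphere under `Φ_A`. -/
def numericalRange {n : ℕ} (A : Matrix (Fin n) (Fin n) ℂ) : Set ℂ :=
  numericalMap A '' (sphere (0 : EuclideanSpace ℂ (Fin n)) 1)

/-- The Hermitian matrix `H(θ) = (e^{-iθ} A + e^{iθ} A*)/2`. -/
def Hmat {n : ℕ} (A : Matrix (Fin n) (Fin n) ℂ) (θ : ℝ) : Matrix (Fin n) (Fin n) ℂ :=
  (1 / 2 : ℂ) •
    (Complex.exp (-(θ : ℂ) * Complex.I) • A + Complex.exp ((θ : ℂ) * Complex.I) • Aᴴ)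

namespace CritAux

open Complex

variable {n : ℕ}

/-- `A` acting on `ℂⁿ`, as a continuous linear map. -/
def Lc (A : Matrix (Fin n) (Fin n) ℂ) :
    EuclideanSpace ℂ (Fin n) →L[ℂ] EuclideanSpace ℂ (Fin n) :=
  LinearMap.toContinuousLinearMap (Matrix.toEuclideanLin A)

lemma Lc_apply (A : Matrix (Fin n) (Fin n) ℂ) (y : EuclideanSpace ℂ (Fin n)) :
    Lc A y = Matrix.toEuclideanLin A y := rfl

lemma inner_adj (A : Matrix (Fin n) (Fin n) ℂ) (x v : EuclideanSpace ℂ (Fin n)) :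
    (inner ℂ x (Lc A v) : ℂ) = inner ℂ (Lc Aᴴ x) v := by
  rw [Lc_apply, Lc_apply, Matrix.toEuclideanLin_conjTranspose_eq_adjoint,
    LinearMap.adjoint_inner_left]

/-- The numerical map, written with `Lc`. -/
def phiA (A : Matrix (Fin n) (Fin n) ℂ) (y : EuclideanSpace ℂ (Fin n)) : ℂ :=
  inner ℂ y (Lc A y)

lemma diff_phiA (A : Matrix (Fin n) (Fin n) ℂ) (y : EuclideanSpace ℂ (Fin n)) :
    DifferentiableAt ℝ (phiA A) y :=
  DifferentiableAt.inner ℂ differentiableAt_fun_id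
    (DifferentiableAt.restrictScalars ℝ (Lc A).differentiableAt)

lemma fderiv_phiA (A : Matrix (Fin n) (Fin n) ℂ) (x v : EuclideanSpace ℂ (Fin n)) :
    fderiv ℝ (phiA A) x v = (inner ℂ x (Lc A v) : ℂ) + inner ℂ v (Lc A x) := by
  have hg : DifferentiableAt ℝ (fun y : EuclideanSpace ℂ (Fin n) => Lc A y) x :=
    DifferentiableAt.restrictScalars ℝ (Lc A).differentiableAt
  have h := fderiv_inner_apply ℂ (differentiableAt_fun_id (x := x)) hg v
  have hgd : fderiv ℝ (fun y : EuclideanSpace ℂ (Fin n) => Lc A y) x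
      = (Lc A).restrictScalars ℝ := ((Lc A).restrictScalars ℝ).fderiv
  have hid : fderiv ℝ (fun y : EuclideanSpace ℂ (Fin n) => y) x
      = ContinuousLinearMap.id ℝ _ := fderiv_id'
  rw [hgd, hid] at h
  rw [show phiA A = fun t => inner ℂ t (Lc A t) from rfl]
  simpa using h

lemma real_inner_eq (x y : EuclideanSpace ℂ (Fin n)) :
    inner ℝ x y = (inner ℂ x y : ℂ).re := by
  rw [PiLp.inner_apply, PiLp.inner_apply, Complex.re_sum]
  refine Finset.sum_congr rfl fun i _ => ?_
  simp [RCLike.inner_apply, Complex.inner]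

lemma real_smul_eq (r : ℝ) (y : EuclideanSpace ℂ (Fin n)) : r • y = (r : ℂ) • y := by
  rw [← algebraMap_smul ℂ r y, Complex.coe_algebraMap]

/-- The vector `conj ω • A x + ω • A* x`. -/
def kvec (A : Matrix (Fin n) (Fin n) ℂ) (x : EuclideanSpace ℂ (Fin n)) (ω : ℂ) :
    EuclideanSpace ℂ (Fin n) :=
  (starRingEnd ℂ ω) • Lc A x + ω • Lc Aᴴ x

lemma key (A : Matrix (Fin n) (Fin n) ℂ) (x v : EuclideanSpace ℂ (Fin n)) (ω : ℂ) :
    inner ℝ (fderiv ℝ (phiA A) x v) ω = inner ℝ v (kvec A x ω) := by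
  rw [Complex.inner, fderiv_phiA, real_inner_eq, kvec, inner_add_right, inner_smul_right,
    inner_smul_right, inner_adj A x v, ← inner_conj_symm v (Lc Aᴴ x)]
  generalize (inner ℂ v (Lc A x) : ℂ) = a
  generalize (inner ℂ v (Lc Aᴴ x) : ℂ) = b
  simp only [map_add, Complex.add_re, Complex.add_im, Complex.mul_re, Complex.mul_im,
    Complex.conj_re, Complex.conj_im, Complex.conj_conj]
  ring

lemma kvec_real_smul (A : Matrix (Fin n) (Fin n) ℂ) (x : EuclideanSpace ℂ (Fin n))
    (s : ℝ) (ω : ℂ) : kvec A x ((s : ℂ) * ω) = (s : ℂ) • kvec A x ω := by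
  simp only [kvec, map_mul, Complex.conj_ofReal, smul_add, smul_smul]

lemma kvec_neg (A : Matrix (Fin n) (Fin n) ℂ) (x : EuclideanSpace ℂ (Fin n)) (ω : ℂ) :
    kvec A x (-ω) = -kvec A x ω := by
  simp only [kvec, map_neg, neg_smul, neg_add]

lemma toEuc_Hmat (A : Matrix (Fin n) (Fin n) ℂ) (θ : ℝ) (x : EuclideanSpace ℂ (Fin n)) :
    Matrix.toEuclideanLin (Hmat A θ) x
      = (1/2 : ℂ) • kvec A x (Complex.exp ((θ : ℂ) * I)) := by
  have hconj : (starRingEnd ℂ) (Complex.exp ((θ : ℂ) * I)) = Complex.exp (-(θ : ℂ) * I) := by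
    rw [← Complex.exp_conj]
    congr 1
    simp [Complex.conj_ofReal]
  rw [kvec, hconj, Hmat]
  simp only [_root_.map_smul, _root_.map_add, LinearMap.smul_apply, LinearMap.add_apply, Lc_apply]

lemma eig_of (c d : ℂ) (hc : c ≠ 0) (y z : EuclideanSpace ℂ (Fin n))
    (h : c • y = d • z) : y = (d / c) • z := by
  have := congrArg (fun w => c⁻¹ • w) h
  simpa [smul_smul, inv_mul_cancel₀ hc, div_eq_inv_mul] using this

end CritAux

set_option maxHeartbeats 2000000 in
open Manifold in
/-- Characterization of the critical points of the numerical map `Φ_A` on the unit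
sphere of `ℂⁿ` (a real manifold of dimension `2n−1`): the differential fails to be
surjective iff `x` is an eigenvector of some `H(θ)`, `θ ∈ [0,π]`; and it vanishes iff
`x` is a common eigenvector of `A` and `A*`. -/
theorem criticalPoint_numericalMap_iff
    (n : ℕ) (hn : 1 ≤ n)
    [Fact (Module.finrank ℝ (EuclideanSpace ℂ (Fin n)) = 2 * n - 1 + 1)]
    (A : Matrix (Fin n) (Fin n) ℂ)
    (x : sphere (0 : EuclideanSpace ℂ (Fin n)) 1) :
    (¬ Function.Surjective
        (mfderiv (𝓡 (2 * n - 1)) 𝓘(ℝ, ℂ)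
          (fun y : sphere (0 : EuclideanSpace ℂ (Fin n)) 1 => numericalMap A y) x) ↔
      ∃ θ ∈ Set.Icc (0 : ℝ) Real.pi, ∃ lam : ℝ,
        Matrix.toEuclideanLin (Hmat A θ) (x : EuclideanSpace ℂ (Fin n)) =
          (lam : ℂ) • (x : EuclideanSpace ℂ (Fin n))) ∧
    ((mfderiv (𝓡 (2 * n - 1)) 𝓘(ℝ, ℂ)
          (fun y : sphere (0 : EuclideanSpace ℂ (Fin n)) 1 => numericalMap A y) x) = 0 ↔
      ((∃ α : ℂ, Matrix.toEuclideanLin A (x : EuclideanSpace ℂ (Fin n)) =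
          α • (x : EuclideanSpace ℂ (Fin n))) ∧
       (∃ β : ℂ, Matrix.toEuclideanLin Aᴴ (x : EuclideanSpace ℂ (Fin n)) =
          β • (x : EuclideanSpace ℂ (Fin n))))) := by
  classical
  have hrankfact := Fact.out (p := Module.finrank ℝ (EuclideanSpace ℂ (Fin n)) = 2 * n - 1 + 1)
  haveI hfd : FiniteDimensional ℝ (EuclideanSpace ℂ (Fin n)) :=
    FiniteDimensional.of_finrank_pos (by omega)
  have hfun : (fun y : sphere (0 : EuclideanSpace ℂ (Fin n)) 1 => numericalMap A ↑y)
      = (CritAux.phiA A) ∘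
        ((↑) : sphere (0 : EuclideanSpace ℂ (Fin n)) 1 → EuclideanSpace ℂ (Fin n)) := rfl
  have hcomp : mfderiv (𝓡 (2 * n - 1)) 𝓘(ℝ, ℂ)
      (fun y : sphere (0 : EuclideanSpace ℂ (Fin n)) 1 => numericalMap A ↑y) x
      = (fderiv ℝ (CritAux.phiA A) (x : EuclideanSpace ℂ (Fin n))).comp
        (mfderiv (𝓡 (2 * n - 1)) 𝓘(ℝ, EuclideanSpace ℂ (Fin n))
          ((↑) : sphere (0 : EuclideanSpace ℂ (Fin n)) 1 → EuclideanSpace ℂ (Fin n)) x) := by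
    rw [hfun, mfderiv_comp x
      ((CritAux.diff_phiA A _).mdifferentiableAt)
      ((contMDiff_coe_sphere x).mdifferentiableAt (by simp : (⊤ : WithTop ℕ∞) ≠ 0)), mfderiv_eq_fderiv]
    rfl
  rw [hcomp]
  set D : EuclideanSpace ℂ (Fin n) →L[ℝ] ℂ :=
    fderiv ℝ (CritAux.phiA A) (x : EuclideanSpace ℂ (Fin n)) with hDdef
  set J : TangentSpace (𝓡 (2 * n - 1)) x →L[ℝ] EuclideanSpace ℂ (Fin n) := mfderiv (𝓡 (2 * n - 1)) 𝓘(ℝ, EuclideanSpace ℂ (Fin n))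
      ((↑) : sphere (0 : EuclideanSpace ℂ (Fin n)) 1 → EuclideanSpace ℂ (Fin n)) x with hJdef
  set T : Submodule ℝ (EuclideanSpace ℂ (Fin n)) :=
    (ℝ ∙ ((x : EuclideanSpace ℂ (Fin n))))ᗮ with hTdef
  have hrange : LinearMap.range (J : TangentSpace (𝓡 (2 * n - 1)) x →ₗ[ℝ] EuclideanSpace ℂ (Fin n)) = T := by
    have h := range_mfderiv_coe_sphere (n := 2 * n - 1) x
    exact h
  set S : Submodule ℝ ℂ :=
    Submodule.map (D : EuclideanSpace ℂ (Fin n) →ₗ[ℝ] ℂ) T with hSdef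
  -- membership in Sᗮ
  have hmemS : ∀ ω : ℂ, ω ∈ Sᗮ ↔
      CritAux.kvec A (x : EuclideanSpace ℂ (Fin n)) ω ∈
        (ℝ ∙ ((x : EuclideanSpace ℂ (Fin n)))) := by
    intro ω
    rw [Submodule.mem_orthogonal]
    constructor
    · intro h
      have h2 : CritAux.kvec A (x : EuclideanSpace ℂ (Fin n)) ω ∈ Tᗮ := by
        rw [Submodule.mem_orthogonal]
        intro v hv
        have h3 := h (D v) (Submodule.mem_map_of_mem hv)
        exact (CritAux.key A (x : EuclideanSpace ℂ (Fin n)) v ω).symm.trans h3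
      rwa [hTdef, Submodule.orthogonal_orthogonal] at h2
    · intro h u hu
      obtain ⟨v, hv, rfl⟩ := hu
      have h2 : CritAux.kvec A (x : EuclideanSpace ℂ (Fin n)) ω ∈ Tᗮ := by
        rw [hTdef, Submodule.orthogonal_orthogonal]; exact h
      have := (Submodule.mem_orthogonal T _).1 h2 v hv
      exact (CritAux.key A (x : EuclideanSpace ℂ (Fin n)) v ω).trans this
  have hrange2 : LinearMap.range (D.comp J : TangentSpace (𝓡 (2 * n - 1)) x →ₗ[ℝ] ℂ) = S := by
    ext z
    simp only [LinearMap.mem_range, hSdef, Submodule.mem_map,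
      ContinuousLinearMap.coe_comp', Function.comp_apply, ← hrange]
    constructor
    · rintro ⟨u, rfl⟩; exact ⟨J u, LinearMap.mem_range_self _ u, rfl⟩
    · rintro ⟨v, ⟨u, rfl⟩, rfl⟩; exact ⟨u, rfl⟩
  have hsurj : Function.Surjective ⇑(D.comp J) ↔ S = ⊤ := by
    rw [← hrange2]
    exact (LinearMap.range_eq_top (f := (D.comp J : TangentSpace (𝓡 (2 * n - 1)) x →ₗ[ℝ] ℂ))).symm
  have hHx : ∀ θ : ℝ, Matrix.toEuclideanLin (Hmat A θ) (x : EuclideanSpace ℂ (Fin n))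
      = (1/2 : ℂ) • CritAux.kvec A (x : EuclideanSpace ℂ (Fin n))
          (Complex.exp ((θ : ℂ) * Complex.I)) :=
    fun θ => CritAux.toEuc_Hmat A θ (x : EuclideanSpace ℂ (Fin n))
  constructor
  · -- part 1
    refine (not_congr hsurj).trans ?_
    rw [← Submodule.orthogonal_eq_bot_iff, ← ne_eq, Submodule.ne_bot_iff]
    constructor
    · rintro ⟨ω, hωS, hω0⟩
      have hωmem := (hmemS ω).1 hωS
      obtain ⟨r, hr⟩ := Submodule.mem_span_singleton.1 hωmem
      set s : ℝ := ‖ω‖ with hsdef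
      have hs : 0 < s := norm_pos_iff.2 hω0
      have hsne : ((s : ℂ)) ≠ 0 := by
        simpa using ne_of_gt hs
      have hωeq : (s : ℂ) * Complex.exp ((ω.arg : ℂ) * Complex.I) = ω :=
        Complex.norm_mul_exp_arg_mul_I ω
      have hscale : CritAux.kvec A (x : EuclideanSpace ℂ (Fin n)) ω
          = (s : ℂ) • CritAux.kvec A (x : EuclideanSpace ℂ (Fin n))
              (Complex.exp ((ω.arg : ℂ) * Complex.I)) := by
        rw [← CritAux.kvec_real_smul, hωeq]
      have hrc : (s : ℂ) • CritAux.kvec A (x : EuclideanSpace ℂ (Fin n))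
          (Complex.exp ((ω.arg : ℂ) * Complex.I)) = ((r : ℂ)) • (x : EuclideanSpace ℂ (Fin n)) := by
        rw [← hscale, ← CritAux.real_smul_eq, hr]
      have hkexp : CritAux.kvec A (x : EuclideanSpace ℂ (Fin n))
          (Complex.exp ((ω.arg : ℂ) * Complex.I))
          = ((r : ℂ) / (s : ℂ)) • (x : EuclideanSpace ℂ (Fin n)) :=
        CritAux.eig_of _ _ hsne _ _ hrc
      rcases le_or_gt 0 ω.arg with hθ | hθ
      · refine ⟨ω.arg, ⟨hθ, Complex.arg_le_pi ω⟩, r / (2 * s), ?_⟩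
        rw [hHx ω.arg, hkexp, smul_smul]
        congr 1
        push_cast
        field_simp
      · have harg1 : (0:ℝ) ≤ ω.arg + Real.pi := by
          have := Complex.neg_pi_lt_arg ω
          linarith
        have harg2 : ω.arg + Real.pi ≤ Real.pi := by linarith
        refine ⟨ω.arg + Real.pi, ⟨harg1, harg2⟩, -(r / (2 * s)), ?_⟩
        have hexp : Complex.exp (((ω.arg + Real.pi : ℝ) : ℂ) * Complex.I)
            = -Complex.exp ((ω.arg : ℂ) * Complex.I) := by
          push_cast
          rw [add_mul, Complex.exp_add, Complex.exp_pi_mul_I]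
          ring
        rw [hHx (ω.arg + Real.pi), hexp, CritAux.kvec_neg, hkexp, smul_neg, smul_smul]
        rw [← neg_smul]
        congr 1
        push_cast
        field_simp
    · rintro ⟨θ, hθ, lam, hlam⟩
      refine ⟨Complex.exp ((θ : ℂ) * Complex.I), ?_, Complex.exp_ne_zero _⟩
      rw [hmemS]
      rw [hHx θ] at hlam
      have h2 : CritAux.kvec A (x : EuclideanSpace ℂ (Fin n))
          (Complex.exp ((θ : ℂ) * Complex.I)) = ((2 * lam : ℝ)) • (x : EuclideanSpace ℂ (Fin n)) := by
        have := congrArg (fun y : EuclideanSpace ℂ (Fin n) => (2 : ℂ) • y) hlam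
        simp only [smul_smul] at this
        norm_num at this
        rw [this, CritAux.real_smul_eq]
        push_cast
        ring_nf
      rw [h2]
      exact Submodule.smul_mem _ _ (Submodule.mem_span_singleton_self _)
  · -- part 2
    have hzero : (D.comp J = 0) ↔ ∀ v ∈ T, D v = 0 := by
      constructor
      · intro h v hv
        rw [← hrange] at hv
        obtain ⟨u, rfl⟩ := hv
        have := ContinuousLinearMap.ext_iff.1 h u
        simpa using this
      · intro h
        ext u
        simp only [ContinuousLinearMap.comp_apply, ContinuousLinearMap.zero_apply]
        exact h (J u) (by rw [← hrange]; exact LinearMap.mem_range_self _ u)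
    refine hzero.trans ?_
    constructor
    · intro h
      have hall : ∀ ω : ℂ, CritAux.kvec A (x : EuclideanSpace ℂ (Fin n)) ω ∈
          (ℝ ∙ ((x : EuclideanSpace ℂ (Fin n)))) := by
        intro ω
        rw [← hmemS, Submodule.mem_orthogonal]
        intro u hu
        obtain ⟨v, hv, rfl⟩ := hu
        have hD0 : (D : EuclideanSpace ℂ (Fin n) →ₗ[ℝ] ℂ) v = 0 := h v hv
        rw [hD0, inner_zero_left]
      obtain ⟨c0, hc0⟩ := Submodule.mem_span_singleton.1 (hall 1)
      obtain ⟨c1, hc1⟩ := Submodule.mem_span_singleton.1 (hall Complex.I)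
      have h1 : CritAux.Lc A (x : EuclideanSpace ℂ (Fin n))
          + CritAux.Lc Aᴴ (x : EuclideanSpace ℂ (Fin n))
          = ((c0 : ℂ)) • (x : EuclideanSpace ℂ (Fin n)) := by
        rw [← CritAux.real_smul_eq, hc0]
        simp [CritAux.kvec]
      have h2 : (-Complex.I) • CritAux.Lc A (x : EuclideanSpace ℂ (Fin n))
          + Complex.I • CritAux.Lc Aᴴ (x : EuclideanSpace ℂ (Fin n))
          = ((c1 : ℂ)) • (x : EuclideanSpace ℂ (Fin n)) := by
        rw [← CritAux.real_smul_eq, hc1]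
        simp [CritAux.kvec, Complex.conj_I]
      have h3 : CritAux.Lc A (x : EuclideanSpace ℂ (Fin n))
          - CritAux.Lc Aᴴ (x : EuclideanSpace ℂ (Fin n))
          = (Complex.I * (c1 : ℂ)) • (x : EuclideanSpace ℂ (Fin n)) := by
        have := congrArg (fun y : EuclideanSpace ℂ (Fin n) => Complex.I • y) h2
        simp only [smul_add, smul_smul, mul_neg, Complex.I_mul_I, neg_neg, one_smul,
          neg_one_smul] at this
        simpa [sub_eq_add_neg] using this
      constructor
      · refine ⟨((c0 : ℂ) + Complex.I * (c1 : ℂ)) / 2, ?_⟩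
        have h4 : (2 : ℂ) • CritAux.Lc A (x : EuclideanSpace ℂ (Fin n))
            = (((c0 : ℂ) + Complex.I * (c1 : ℂ))) • (x : EuclideanSpace ℂ (Fin n)) := by
          rw [add_smul, ← h1, ← h3]
          module
        exact CritAux.eig_of _ _ two_ne_zero _ _ h4
      · refine ⟨((c0 : ℂ) - Complex.I * (c1 : ℂ)) / 2, ?_⟩
        have h4 : (2 : ℂ) • CritAux.Lc Aᴴ (x : EuclideanSpace ℂ (Fin n))
            = (((c0 : ℂ) - Complex.I * (c1 : ℂ))) • (x : EuclideanSpace ℂ (Fin n)) := by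
          rw [sub_smul, ← h1, ← h3]
          module
        exact CritAux.eig_of _ _ two_ne_zero _ _ h4
    · rintro ⟨⟨α, hα⟩, ⟨β, hβ⟩⟩ v hv
      have hα' : CritAux.Lc A (x : EuclideanSpace ℂ (Fin n))
          = α • (x : EuclideanSpace ℂ (Fin n)) := hα
      have hβ' : CritAux.Lc Aᴴ (x : EuclideanSpace ℂ (Fin n))
          = β • (x : EuclideanSpace ℂ (Fin n)) := hβ
      have hxnorm : ‖(x : EuclideanSpace ℂ (Fin n))‖ = 1 := by
        have := x.2
        rwa [mem_sphere_zero_iff_norm] at this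
      have hxx : (inner ℂ (x : EuclideanSpace ℂ (Fin n)) (x : EuclideanSpace ℂ (Fin n)) : ℂ) = 1 := by
        rw [inner_self_eq_norm_sq_to_K, hxnorm]
        norm_num
      have hβα : β = starRingEnd ℂ α := by
        have e1 : (inner ℂ (x : EuclideanSpace ℂ (Fin n))
            (CritAux.Lc A (x : EuclideanSpace ℂ (Fin n))) : ℂ) = α := by
          rw [hα', inner_smul_right, hxx, mul_one]
        have e2 : (inner ℂ (x : EuclideanSpace ℂ (Fin n))
            (CritAux.Lc Aᴴ (x : EuclideanSpace ℂ (Fin n))) : ℂ) = β := by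
          rw [hβ', inner_smul_right, hxx, mul_one]
        have e3 : (inner ℂ (x : EuclideanSpace ℂ (Fin n))
            (CritAux.Lc Aᴴ (x : EuclideanSpace ℂ (Fin n))) : ℂ)
            = starRingEnd ℂ (inner ℂ (x : EuclideanSpace ℂ (Fin n))
                (CritAux.Lc A (x : EuclideanSpace ℂ (Fin n))) : ℂ) := by
          rw [CritAux.inner_adj Aᴴ, Matrix.conjTranspose_conjTranspose,
            ← inner_conj_symm]
        rw [← e2, e3, e1]
      have hxv : (inner ℂ (x : EuclideanSpace ℂ (Fin n)) v : ℂ)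
          + starRingEnd ℂ (inner ℂ (x : EuclideanSpace ℂ (Fin n)) v : ℂ) = 0 := by
        have hv2 : inner ℝ (x : EuclideanSpace ℂ (Fin n)) v = 0 :=
          Submodule.mem_orthogonal_singleton_iff_inner_right.1 hv
        rw [CritAux.real_inner_eq] at hv2
        rw [Complex.add_conj, hv2]
        norm_num
      show D v = 0
      rw [hDdef]
      rw [CritAux.fderiv_phiA, CritAux.inner_adj, hβ', hα', inner_smul_left,
        inner_smul_right, hβα, Complex.conj_conj, ← inner_conj_symm
          v (x : EuclideanSpace ℂ (Fin n)), ← mul_add, hxv, mul_zero]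
end
end

section
/- Let A be an n×n complex matrix, z ∈ ℂ, and define g : ℝ → ℝ by g(θ) = det(H(θ) − Re(z e^{−iθ}) Iₙ), where H(θ) = (e^{−iθ}A + e^{iθ}A*)/2. If g is not identically zero, then the set {θ ∈ [0,π) : g(θ) = 0} has at most n elements. -/
open MeasureTheory Metric
open scoped Matrix ComplexOrder

noncomputable section

/-- The function `θ ↦ det(H(θ) − Re(z e^{−iθ}) Iₙ)`, if not identically zero, has at
most `n` zeros in `[0, π)`. -/
theorem det_Hmat_zeros_le
    (n : ℕ) (A : Matrix (Fin n) (Fin n) ℂ) (z : ℂ)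
    (g : ℝ → ℂ)
    (hg : g = fun θ : ℝ =>
      (Hmat A θ - (((Complex.exp (-(θ : ℂ) * Complex.I) * z).re : ℂ)) •
          (1 : Matrix (Fin n) (Fin n) ℂ)).det)
    (hne : ∃ θ : ℝ, g θ ≠ 0) :
    {θ ∈ Set.Ico (0 : ℝ) Real.pi | g θ = 0}.Finite ∧
      {θ ∈ Set.Ico (0 : ℝ) Real.pi | g θ = 0}.ncard ≤ n := by
  classical
  set B : Matrix (Fin n) (Fin n) ℂ := (1/2 : ℂ) • (A - z • (1 : Matrix (Fin n) (Fin n) ℂ)) with hB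
  set Cm : Matrix (Fin n) (Fin n) ℂ :=
    (1/2 : ℂ) • (Aᴴ - (starRingEnd ℂ z) • (1 : Matrix (Fin n) (Fin n) ℂ)) with hC
  set M : Matrix (Fin n) (Fin n) (Polynomial ℂ) :=
    Matrix.of (fun i j => Polynomial.C (B i j) + Polynomial.C (Cm i j) * Polynomial.X) with hM
  set P : Polynomial ℂ := M.det with hP
  have heval : ∀ w : ℂ, P.eval w = (B + w • Cm).det := by
    intro w
    have h := RingHom.map_det (Polynomial.evalRingHom w) M
    rw [hP, show (M.det).eval w = (Polynomial.evalRingHom w) M.det from rfl, h]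
    congr 1
    ext i j
    simp only [hM, RingHom.mapMatrix_apply, Matrix.map_apply, Matrix.of_apply, Matrix.add_apply, Matrix.smul_apply,
      Polynomial.coe_evalRingHom, Polynomial.eval_add, Polynomial.eval_mul, Polynomial.eval_C,
      Polynomial.eval_X, smul_eq_mul]
    ring
  have key : ∀ θ : ℝ, g θ =
      Complex.exp (-(θ : ℂ) * Complex.I) ^ n * P.eval (Complex.exp (2 * (θ:ℂ) * Complex.I)) := by
    intro θ
    have hconj : (starRingEnd ℂ) (Complex.exp (-(θ:ℂ)*Complex.I)) = Complex.exp ((θ:ℂ)*Complex.I) := by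
      rw [← Complex.exp_conj]
      congr 1
      simp [Complex.conj_ofReal]
    have hre : (((Complex.exp (-(θ:ℂ)*Complex.I) * z).re : ℝ) : ℂ)
        = (Complex.exp (-(θ:ℂ)*Complex.I) * z + Complex.exp ((θ:ℂ)*Complex.I) * starRingEnd ℂ z)/2 := by
      have h2 := Complex.add_conj (Complex.exp (-(θ:ℂ)*Complex.I) * z)
      rw [map_mul, hconj] at h2
      push_cast at h2
      rw [eq_div_iff (two_ne_zero (α := ℂ))]
      linear_combination -h2
    have hexp : Complex.exp (-(θ:ℂ)*Complex.I) * Complex.exp (2*(θ:ℂ)*Complex.I)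
        = Complex.exp ((θ:ℂ)*Complex.I) := by
      rw [← Complex.exp_add]; ring_nf
    have h1 : Hmat A θ - (((Complex.exp (-(θ : ℂ) * Complex.I) * z).re : ℂ)) •
          (1 : Matrix (Fin n) (Fin n) ℂ)
        = Complex.exp (-(θ:ℂ)*Complex.I) • B + Complex.exp ((θ:ℂ)*Complex.I) • Cm := by
      rw [hre, hB, hC]
      ext i j
      simp only [Hmat, Matrix.sub_apply, Matrix.smul_apply, Matrix.add_apply, Matrix.one_apply,
        smul_eq_mul]
      by_cases hij : i = j <;> simp [hij] <;> ring
    have h2 : Complex.exp (-(θ:ℂ)*Complex.I) • (B + Complex.exp (2*(θ:ℂ)*Complex.I) • Cm)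
        = Complex.exp (-(θ:ℂ)*Complex.I) • B + Complex.exp ((θ:ℂ)*Complex.I) • Cm := by
      rw [smul_add]
      congr 1
      rw [smul_smul, hexp]
    rw [hg]
    simp only
    rw [h1, ← h2, Matrix.det_smul, heval, Fintype.card_fin]
  have hPne : P ≠ 0 := by
    obtain ⟨θ0, h0⟩ := hne
    intro hP0
    apply h0
    rw [key θ0, hP0]
    simp
  have hzero : ∀ θ : ℝ, g θ = 0 ↔ P.eval (Complex.exp (2*(θ:ℂ)*Complex.I)) = 0 := by
    intro θ
    rw [key θ]
    simp [Complex.exp_ne_zero]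
  have hinj : Set.InjOn (fun θ : ℝ => Complex.exp (2*(θ:ℂ)*Complex.I)) (Set.Ico 0 Real.pi) := by
    intro θ1 h1 θ2 h2 heq
    simp only at heq
    rw [Complex.exp_eq_exp_iff_exists_int] at heq
    obtain ⟨k, hk⟩ := heq
    have him := congrArg Complex.im hk
    simp [Complex.add_im, Complex.mul_im, Complex.mul_re] at him
    rcases h1 with ⟨h1a, h1b⟩
    rcases h2 with ⟨h2a, h2b⟩
    have hpi := Real.pi_pos
    have hk0 : k = 0 := by
      have habs : |(k:ℝ)| * (2 * Real.pi) = |2*θ1 - 2*θ2| := by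
        rw [← abs_of_pos (by linarith : (0:ℝ) < 2 * Real.pi), ← abs_mul]
        congr 1
        linarith [him]
      have hlt : |2*θ1 - 2*θ2| < 2 * Real.pi := by
        rw [abs_lt]; constructor <;> linarith
      have : |(k : ℝ)| < 1 := by nlinarith [abs_nonneg ((k:ℝ))]
      have h := abs_lt.mp this
      have hlt1 : (-1:ℤ) < k := by exact_mod_cast h.1
      have hlt2 : (k:ℤ) < 1 := by exact_mod_cast h.2
      omega
    rw [hk0] at him
    simp at him
    linarith [him]
  set T : Set ℂ := ↑P.roots.toFinset with hT
  have hmaps : ∀ θ ∈ {θ ∈ Set.Ico (0 : ℝ) Real.pi | g θ = 0},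
      Complex.exp (2*(θ:ℂ)*Complex.I) ∈ T := by
    rintro θ ⟨hθ, hgθ⟩
    rw [hT]
    simp only [Finset.coe_sort_coe, Multiset.mem_toFinset, Finset.mem_coe]
    rw [Polynomial.mem_roots hPne]
    exact (hzero θ).mp hgθ
  have hTfin : T.Finite := (P.roots.toFinset : Finset ℂ).finite_toSet
  have hinj' : Set.InjOn (fun θ : ℝ => Complex.exp (2*(θ:ℂ)*Complex.I))
      {θ ∈ Set.Ico (0 : ℝ) Real.pi | g θ = 0} :=
    hinj.mono (fun θ hθ => hθ.1)
  constructor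
  · apply Set.Finite.of_finite_image _ hinj'
    exact hTfin.subset (Set.image_subset_iff.mpr hmaps)
  · calc {θ ∈ Set.Ico (0 : ℝ) Real.pi | g θ = 0}.ncard
        ≤ T.ncard := Set.ncard_le_ncard_of_injOn _ hmaps hinj' hTfin
      _ = P.roots.toFinset.card := by rw [hT, Set.ncard_coe_finset]
      _ ≤ Multiset.card P.roots := Multiset.toFinset_card_le _
      _ ≤ P.natDegree := P.card_roots'
      _ ≤ n := by
          rw [hP, Matrix.det_apply']
          apply Polynomial.natDegree_sum_le_of_forall_le
          intro σ _
          refine le_trans (Polynomial.natDegree_mul_le) ?_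
          rw [Polynomial.natDegree_intCast, zero_add]
          refine le_trans (Polynomial.natDegree_prod_le _ _) ?_
          have hent : ∀ i : Fin n, (M (σ i) i).natDegree ≤ 1 := by
            intro i
            rw [hM]
            refine le_trans (Polynomial.natDegree_add_le _ _) ?_
            exact max_le (by simp) (le_trans (Polynomial.natDegree_mul_le) (by simp))
          calc ∑ i, (M (σ i) i).natDegree ≤ ∑ _i : Fin n, 1 :=
                Finset.sum_le_sum (fun i _ => hent i)
            _ = n := by simp
end
end
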